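/- Let D be an n×n positive definite diagonal matrix and A, Ã symmetric n×n matrices. If (1-ε)(D - A) ⪯ D - Ã ⪯ (1+ε)(D - A) and (1-ε)(D + A) ⪯ D + Ã ⪯ (1+ε)(D + A) for some 0 ≤ ε < 1, then (1-ε)(D - A D⁻¹ A) ⪯ D - Ã D⁻¹ Ã ⪯ (1+ε)(D - A D⁻¹ A). -/

import Mathlib

open Matrix

section Aux

variable {n : ℕ}

private lemma psd_smul' {c : ℝ} (hc : 0 ≤ c) {X : Matrix (Fin n) (Fin n) ℝ}
    (hX : X.PosSemidef) : (c • X).PosSemidef := by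
  refine posSemidef_iff_dotProduct_mulVec.mpr ⟨?_, fun x => ?_⟩
  · unfold Matrix.IsHermitian
    rw [conjTranspose_smul, hX.1]
    simp
  · rw [smul_mulVec, dotProduct_smul]
    exact smul_nonneg hc (hX.dotProduct_mulVec_nonneg x)

private lemma psd_of_smul' {c : ℝ} (hc : 0 < c) {X : Matrix (Fin n) (Fin n) ℝ}
    (hX : (c • X).PosSemidef) : X.PosSemidef := by
  have := psd_smul' (c := c⁻¹) (by positivity) hX
  rwa [smul_smul, inv_mul_cancel₀ hc.ne', one_smul] at this

private lemma psd_conj {X S : Matrix (Fin n) (Fin n) ℝ} (hX : X.PosSemidef)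
    (hS : Sᴴ = S) : (S * X * S).PosSemidef := by
  have := hX.conjTranspose_mul_mul_same S
  rwa [hS] at this

/-- key: if ε•1 - F and ε•1 + F are PSD and F Hermitian, then ε²•1 - F*F is PSD. -/
private lemma psd_key {F : Matrix (Fin n) (Fin n) ℝ} (hF : F.IsHermitian) {ε : ℝ}
    (h1 : (ε • (1 : Matrix (Fin n) (Fin n) ℝ) - F).PosSemidef)
    (h2 : (ε • (1 : Matrix (Fin n) (Fin n) ℝ) + F).PosSemidef) :
    ((ε ^ 2) • (1 : Matrix (Fin n) (Fin n) ℝ) - F * F).PosSemidef := by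
  set U : Matrix (Fin n) (Fin n) ℝ := (hF.eigenvectorUnitary : Matrix (Fin n) (Fin n) ℝ)
  have hUU : star U * U = 1 := Unitary.coe_star_mul_self hF.eigenvectorUnitary
  have hUU' : U * star U = 1 := Unitary.coe_mul_star_self hF.eigenvectorUnitary
  set μ : Fin n → ℝ := hF.eigenvalues
  have hspec : star U * F * U = diagonal μ := by
    have := hF.conjStarAlgAut_star_eigenvectorUnitary
    simpa [Unitary.conjStarAlgAut_star_apply] using this
  have hbound : ∀ i, ε - μ i ≥ 0 ∧ ε + μ i ≥ 0 := by
    intro i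
    have c1 := h1.conjTranspose_mul_mul_same U
    have c2 := h2.conjTranspose_mul_mul_same U
    rw [show Uᴴ = star U from rfl] at c1 c2
    have e1 : star U * (ε • 1 - F) * U = diagonal (fun i => ε - μ i) := by
      rw [Matrix.mul_sub, Matrix.sub_mul, Matrix.mul_smul, Matrix.smul_mul, mul_one, hUU, hspec]
      rw [Matrix.smul_one_eq_diagonal, ← diagonal_sub]
    have e2 : star U * (ε • 1 + F) * U = diagonal (fun i => ε + μ i) := by
      rw [Matrix.mul_add, Matrix.add_mul, Matrix.mul_smul, Matrix.smul_mul, mul_one, hUU, hspec]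
      rw [Matrix.smul_one_eq_diagonal, ← diagonal_add]
    rw [e1] at c1; rw [e2] at c2
    exact ⟨posSemidef_diagonal_iff.mp c1 i, posSemidef_diagonal_iff.mp c2 i⟩
  have hFdecomp : F = U * diagonal μ * star U := by
    have := hF.spectral_theorem
    simpa using this
  have hmain : (ε ^ 2) • (1 : Matrix (Fin n) (Fin n) ℝ) - F * F
      = U * diagonal (fun i => ε ^ 2 - μ i ^ 2) * star U := by
    have hFF : F * F = U * diagonal (fun i => μ i ^ 2) * star U := by
      rw [hFdecomp]
      calc (U * diagonal μ * star U) * (U * diagonal μ * star U)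
          = U * (diagonal μ * ((star U * U) * (diagonal μ * star U))) := by
            simp only [Matrix.mul_assoc]
        _ = U * ((diagonal μ * diagonal μ) * star U) := by
            rw [hUU, Matrix.one_mul, Matrix.mul_assoc]
        _ = U * diagonal (fun i => μ i ^ 2) * star U := by
            rw [diagonal_mul_diagonal, Matrix.mul_assoc]
            congr 2
            ext i
            ring_nf
    have h1' : (1 : Matrix (Fin n) (Fin n) ℝ) = U * 1 * star U := by
      rw [Matrix.mul_one, hUU']
    calc (ε ^ 2) • (1 : Matrix (Fin n) (Fin n) ℝ) - F * F
        = (ε ^ 2) • (U * 1 * star U) - U * diagonal (fun i => μ i ^ 2) * star U := by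
          rw [← h1', ← hFF]
      _ = U * ((ε ^ 2) • 1 - diagonal (fun i => μ i ^ 2)) * star U := by
          rw [Matrix.mul_sub, Matrix.sub_mul, Matrix.mul_smul, Matrix.smul_mul]
      _ = U * diagonal (fun i => ε ^ 2 - μ i ^ 2) * star U := by
          rw [Matrix.smul_one_eq_diagonal, ← diagonal_sub]
  rw [hmain, show U * diagonal (fun i => ε ^ 2 - μ i ^ 2) * star U
      = U * diagonal (fun i => ε ^ 2 - μ i ^ 2) * Uᴴ from rfl]
  apply Matrix.PosSemidef.mul_mul_conjTranspose_same
  rw [posSemidef_diagonal_iff]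
  intro i
  have := hbound i
  nlinarith [this.1, this.2]

end Aux

section Aux2

variable {n : ℕ}

private lemma eq_zero_of_psd_neg_sq {F : Matrix (Fin n) (Fin n) ℝ} (hF : F.IsHermitian)
    (h : (((0:ℝ) ^ 2) • (1 : Matrix (Fin n) (Fin n) ℝ) - F * F).PosSemidef) : F = 0 := by
  have hFt : Fᵀ = F := hF
  have hmat : (((0:ℝ) ^ 2) • (1 : Matrix (Fin n) (Fin n) ℝ) - F * F) = -(F * F) := by
    norm_num
  rw [hmat] at h
  have hx : ∀ x : Fin n → ℝ, F *ᵥ x = 0 := by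
    intro x
    have h0 := h.dotProduct_mulVec_nonneg x
    have he : star x ⬝ᵥ (-(F * F)) *ᵥ x = -((F *ᵥ x) ⬝ᵥ (F *ᵥ x)) := by
      simp only [star_trivial, neg_mulVec, dotProduct_neg, ← mulVec_mulVec]
      rw [dotProduct_mulVec, show x ᵥ* F = F *ᵥ x by
        conv_lhs => rw [← hFt]
        rw [vecMul_transpose]]
    rw [he] at h0
    have hzero := dotProduct_self_eq_zero (v := F *ᵥ x)
    have hnn : (0:ℝ) ≤ (F *ᵥ x) ⬝ᵥ (F *ᵥ x) := by
      simpa using dotProduct_star_self_nonneg (F *ᵥ x)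
    rw [← hzero]
    linarith
  ext i j
  have := congrFun (hx (Pi.single j 1)) i
  rw [mulVec_single] at this
  simpa using this
end Aux2

theorem stmt_4 (n : ℕ) (D A At : Matrix (Fin n) (Fin n) ℝ)
    (hD : D.PosDef) (hDdiag : D.IsDiag) (hA : A.IsSymm) (hAt : At.IsSymm)
    (ε : ℝ) (hε0 : 0 ≤ ε) (hε1 : ε < 1)
    (h1 : ((D - At) - (1 - ε) • (D - A)).PosSemidef)
    (h2 : ((1 + ε) • (D - A) - (D - At)).PosSemidef)
    (h3 : ((D + At) - (1 - ε) • (D + A)).PosSemidef)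
    (h4 : ((1 + ε) • (D + A) - (D + At)).PosSemidef) :
    ((D - At * D⁻¹ * At) - (1 - ε) • (D - A * D⁻¹ * A)).PosSemidef ∧
      ((1 + ε) • (D - A * D⁻¹ * A) - (D - At * D⁻¹ * At)).PosSemidef := by
  classical
  set d : Fin n → ℝ := fun i => D i i with hd_def
  have hd : ∀ i, 0 < d i := by
    intro i
    have hne : (Pi.single i 1 : Fin n → ℝ) ≠ 0 := by
      intro hcon
      have := congrFun hcon i
      simp at this
    have := hD.dotProduct_mulVec_pos hne
    simpa [mulVec_single, dotProduct_single] using this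
  have hDdef : D = diagonal d := by
    rw [← hDdiag.diagonal_diag]; rfl
  set S : Matrix (Fin n) (Fin n) ℝ := diagonal (fun i => (Real.sqrt (d i))⁻¹) with hS_def
  set T : Matrix (Fin n) (Fin n) ℝ := diagonal (fun i => Real.sqrt (d i)) with hT_def
  have hsqrt_ne : ∀ i, Real.sqrt (d i) ≠ 0 := fun i =>
    ne_of_gt (Real.sqrt_pos.mpr (hd i))
  have hST : S * T = 1 := by
    rw [hS_def, hT_def, diagonal_mul_diagonal, ← diagonal_one]
    exact diagonal_eq_diagonal_iff.mpr fun i => inv_mul_cancel₀ (hsqrt_ne i)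
  have hTS : T * S = 1 := by
    rw [hS_def, hT_def, diagonal_mul_diagonal, ← diagonal_one]
    exact diagonal_eq_diagonal_iff.mpr fun i => mul_inv_cancel₀ (hsqrt_ne i)
  have hTT : T * T = D := by
    rw [hT_def, diagonal_mul_diagonal, hDdef]
    exact diagonal_eq_diagonal_iff.mpr fun i => Real.mul_self_sqrt (hd i).le
  have hSDS : S * D * S = 1 := by
    rw [← hTT]
    calc S * (T * T) * S = (S * T) * (T * S) := by simp only [Matrix.mul_assoc]
      _ = 1 := by rw [hST, hTS, Matrix.one_mul]
  have hDinv : D⁻¹ = S * S := by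
    apply inv_eq_right_inv
    rw [← hTT]
    calc T * T * (S * S) = T * (T * S) * S := by simp only [Matrix.mul_assoc]
      _ = 1 := by rw [hTS, Matrix.mul_one, hTS]
  have hSherm : Sᴴ = S := by
    rw [hS_def, diagonal_conjTranspose]
    simp
  have hTherm : Tᴴ = T := by
    rw [hT_def, diagonal_conjTranspose]
    simp
  -- normalized matrices
  set M : Matrix (Fin n) (Fin n) ℝ := S * A * S with hM_def
  set Mt : Matrix (Fin n) (Fin n) ℝ := S * At * S with hMt_def
  have hMherm : M.IsHermitian := by
    unfold Matrix.IsHermitian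
    rw [hM_def, conjTranspose_mul, conjTranspose_mul, hSherm,
      show Aᴴ = A from by rw [conjTranspose_eq_transpose_of_trivial]; exact hA]
    rw [Matrix.mul_assoc]
  have hMtherm : Mt.IsHermitian := by
    unfold Matrix.IsHermitian
    rw [hMt_def, conjTranspose_mul, conjTranspose_mul, hSherm,
      show Atᴴ = At from by rw [conjTranspose_eq_transpose_of_trivial]; exact hAt]
    rw [Matrix.mul_assoc]
  set F : Matrix (Fin n) (Fin n) ℝ := Mt - (1 - ε) • M with hF_def
  set G : Matrix (Fin n) (Fin n) ℝ := Mt - (1 + ε) • M with hG_def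
  have hFherm : F.IsHermitian := by
    unfold Matrix.IsHermitian
    rw [hF_def, conjTranspose_sub, conjTranspose_smul, hMherm, hMtherm]
    simp
  have hGherm : G.IsHermitian := by
    unfold Matrix.IsHermitian
    rw [hG_def, conjTranspose_sub, conjTranspose_smul, hMherm, hMtherm]
    simp
  -- conjugated hypotheses
  have hc1 : (ε • (1 : Matrix (Fin n) (Fin n) ℝ) - F).PosSemidef := by
    have := psd_conj h1 hSherm
    have heq : S * ((D - At) - (1 - ε) • (D - A)) * S = ε • 1 - F := by
      rw [hF_def, hM_def, hMt_def]
      simp only [Matrix.mul_sub, Matrix.sub_mul, Matrix.mul_smul, Matrix.smul_mul, hSDS]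
      module
    rwa [heq] at this
  have hc3 : (ε • (1 : Matrix (Fin n) (Fin n) ℝ) + F).PosSemidef := by
    have := psd_conj h3 hSherm
    have heq : S * ((D + At) - (1 - ε) • (D + A)) * S = ε • 1 + F := by
      rw [hF_def, hM_def, hMt_def]
      simp only [Matrix.mul_sub, Matrix.sub_mul, Matrix.mul_add, Matrix.add_mul,
        Matrix.mul_smul, Matrix.smul_mul, hSDS]
      module
    rwa [heq] at this
  have hc2 : (ε • (1 : Matrix (Fin n) (Fin n) ℝ) + G).PosSemidef := by
    have := psd_conj h2 hSherm
    have heq : S * ((1 + ε) • (D - A) - (D - At)) * S = ε • 1 + G := by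
      rw [hG_def, hM_def, hMt_def]
      simp only [Matrix.mul_sub, Matrix.sub_mul, Matrix.mul_add, Matrix.add_mul,
        Matrix.mul_smul, Matrix.smul_mul, hSDS]
      module
    rwa [heq] at this
  have hc4 : (ε • (1 : Matrix (Fin n) (Fin n) ℝ) - G).PosSemidef := by
    have := psd_conj h4 hSherm
    have heq : S * ((1 + ε) • (D + A) - (D + At)) * S = ε • 1 - G := by
      rw [hG_def, hM_def, hMt_def]
      simp only [Matrix.mul_sub, Matrix.sub_mul, Matrix.mul_add, Matrix.add_mul,
        Matrix.mul_smul, Matrix.smul_mul, hSDS]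
      module
    rwa [heq] at this
  have hKF : ((ε ^ 2) • (1 : Matrix (Fin n) (Fin n) ℝ) - F * F).PosSemidef :=
    psd_key hFherm hc1 hc3
  have hKG : ((ε ^ 2) • (1 : Matrix (Fin n) (Fin n) ℝ) - G * G).PosSemidef := by
    have := psd_key hGherm hc4 hc2
    exact this
  -- transport back: T * (S*X*S * (S*Y*S)) * T = X * D⁻¹ * Y
  have htrans : ∀ X Y : Matrix (Fin n) (Fin n) ℝ,
      T * ((S * X * S) * (S * Y * S)) * T = X * D⁻¹ * Y := by
    intro X Y
    rw [hDinv]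
    calc T * ((S * X * S) * (S * Y * S)) * T
        = (T * S) * (X * ((S * S) * (Y * (S * T)))) := by simp only [Matrix.mul_assoc]
      _ = X * (S * S) * Y := by
          rw [hTS, hST]
          simp only [Matrix.one_mul, Matrix.mul_one, Matrix.mul_assoc]
  set E1 : Matrix (Fin n) (Fin n) ℝ :=
    (1 - Mt * Mt) - (1 - ε) • (1 - M * M) with hE1_def
  set E2 : Matrix (Fin n) (Fin n) ℝ :=
    (1 + ε) • (1 - M * M) - (1 - Mt * Mt) with hE2_def
  have hgoal1 : (D - At * D⁻¹ * At) - (1 - ε) • (D - A * D⁻¹ * A) = T * E1 * T := by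
    rw [hE1_def, hM_def, hMt_def]
    simp only [Matrix.mul_sub, Matrix.sub_mul, Matrix.mul_smul, Matrix.smul_mul,
      Matrix.mul_one, Matrix.one_mul, hTT, htrans]
  have hgoal2 : (1 + ε) • (D - A * D⁻¹ * A) - (D - At * D⁻¹ * At) = T * E2 * T := by
    rw [hE2_def, hM_def, hMt_def]
    simp only [Matrix.mul_sub, Matrix.sub_mul, Matrix.mul_smul, Matrix.smul_mul,
      Matrix.mul_one, Matrix.one_mul, hTT, htrans]
  rcases eq_or_lt_of_le hε0 with hz | hpos
  · -- ε = 0 : F = 0, hence Mt = M and At = A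
    have hF0 : F = 0 := by
      apply eq_zero_of_psd_neg_sq hFherm
      rwa [← hz] at hKF
    have hMtM : Mt = M := by
      have : Mt - (1 - ε) • M = 0 := hF0
      rw [← hz] at this
      simpa [sub_eq_zero] using this
    have hAtA : At = A := by
      have : T * Mt * T = T * M * T := by rw [hMtM]
      rw [hM_def, hMt_def] at this
      calc At = (T * S) * At * (S * T) := by rw [hTS, hST, Matrix.one_mul, Matrix.mul_one]
        _ = T * (S * At * S) * T := by simp only [Matrix.mul_assoc]
        _ = T * (S * A * S) * T := this
        _ = (T * S) * A * (S * T) := by simp only [Matrix.mul_assoc]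
        _ = A := by rw [hTS, hST, Matrix.one_mul, Matrix.mul_one]
    rw [hAtA, ← hz]
    constructor
    · simpa using Matrix.PosSemidef.zero
    · simpa using Matrix.PosSemidef.zero
  · -- ε > 0
    have hsq1 : ((M - Mt) * (M - Mt)).PosSemidef := by
      have h := posSemidef_conjTranspose_mul_self (M - Mt)
      rwa [show (M - Mt)ᴴ = M - Mt from by
        rw [conjTranspose_sub, hMherm, hMtherm]] at h
    have hsq2 : ((Mt - M) * (Mt - M)).PosSemidef := by
      have h := posSemidef_conjTranspose_mul_self (Mt - M)
      rwa [show (Mt - M)ᴴ = Mt - M from by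
        rw [conjTranspose_sub, hMherm, hMtherm]] at h
    have hid1 : ε • E1 = (1 - ε) • ((M - Mt) * (M - Mt))
        + ((ε ^ 2) • (1 : Matrix (Fin n) (Fin n) ℝ) - F * F) := by
      rw [hE1_def, hF_def]
      simp only [Matrix.mul_sub, Matrix.sub_mul, Matrix.mul_smul, Matrix.smul_mul,
        Matrix.mul_one, Matrix.one_mul]
      module
    have hid2 : ε • E2 = (1 + ε) • ((Mt - M) * (Mt - M))
        + ((ε ^ 2) • (1 : Matrix (Fin n) (Fin n) ℝ) - G * G) := by
      rw [hE2_def, hG_def]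
      simp only [Matrix.mul_sub, Matrix.sub_mul, Matrix.mul_smul, Matrix.smul_mul,
        Matrix.mul_one, Matrix.one_mul]
      module
    have hE1psd : E1.PosSemidef := by
      apply psd_of_smul' hpos
      rw [hid1]
      exact (psd_smul' (by linarith) hsq1).add hKF
    have hE2psd : E2.PosSemidef := by
      apply psd_of_smul' hpos
      rw [hid2]
      exact (psd_smul' (by linarith) hsq2).add hKG
    constructor
    · rw [hgoal1]; exact psd_conj hE1psd hTherm
    · rw [hgoal2]; exact psd_conj hE2psd hTherm
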